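/- Let Q be a closed densely defined operator between Hilbert spaces with dom Q = dom Q*Q. Then dom Q* is the whole codomain space and Q* (hence Q) is bounded. -/

import Mathlib

open Filter Topology RCLike
open scoped ComplexConjugate

noncomputable section

/-- A nonnegative symmetric sesquilinear form on a subspace `D` of `H`. -/
structure NonnegForm (𝕜 : Type*) [RCLike 𝕜] {H : Type*} [NormedAddCommGroup H]
    [InnerProductSpace 𝕜 H] (D : Submodule 𝕜 H) where
  toFun : D → D → 𝕜
  add_left : ∀ x y z : D, toFun (x + y) z = toFun x z + toFun y z
  smul_left : ∀ (c : 𝕜) (x y : D), toFun (c • x) y = c * toFun x y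
  conj_symm : ∀ x y : D, toFun x y = (starRingEnd 𝕜) (toFun y x)
  nonneg : ∀ x : D, 0 ≤ RCLike.re (toFun x x)

variable {𝕜 H K : Type*} [RCLike 𝕜] [NormedAddCommGroup H] [InnerProductSpace 𝕜 H]
  [NormedAddCommGroup K] [InnerProductSpace 𝕜 K] [CompleteSpace H] [CompleteSpace K]

/-- A partial operator is positive if `⟪x, T x⟫ ≥ 0` on its domain. -/
def IsPositivePMap (T : H →ₗ.[𝕜] H) : Prop :=
  ∀ x : T.domain, 0 ≤ RCLike.re (@inner 𝕜 H _ (x : H) (T x))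

/-- `C` is the (unbounded) composition `A ∘ B` of the partial operators `A` and `B`,
with natural domain `{x ∈ dom B : B x ∈ dom A}`. -/
def IsPComp (A : K →ₗ.[𝕜] H) (B : H →ₗ.[𝕜] K) (C : H →ₗ.[𝕜] H) : Prop :=
  (∀ x : H, x ∈ C.domain ↔ ∃ hx : x ∈ B.domain, B ⟨x, hx⟩ ∈ A.domain) ∧
  ∀ (x : H) (hxC : x ∈ C.domain) (hx : x ∈ B.domain) (hBx : B ⟨x, hx⟩ ∈ A.domain),
    C ⟨x, hxC⟩ = A ⟨B ⟨x, hx⟩, hBx⟩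

/-- `R` is the positive self-adjoint square root of `T`, i.e. `R` is positive
self-adjoint and `R ∘ R = T` as partial operators. -/
def IsSqrtOf (R T : H →ₗ.[𝕜] H) : Prop :=
  IsSelfAdjoint R ∧ IsPositivePMap R ∧ IsPComp R R T

/-- The set `D₊` of all `g ∈ D` with `|t(g,h)|² ≤ C‖h‖²` for some `C ≥ 0` and all `h ∈ D`. -/
def Dplus {D : Submodule 𝕜 H} (t : NonnegForm 𝕜 D) : Set H :=
  {g | ∃ hg : g ∈ D, ∃ C : ℝ, 0 ≤ C ∧ ∀ h : D, ‖t.toFun ⟨g, hg⟩ h‖ ^ 2 ≤ C * ‖(h : H)‖ ^ 2}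

/-- The set `D₊₊` of all `g ∈ D` approximable by a sequence from `D₊` converging
to `g` in `H` and in the seminorm of the form `t`. -/
def Dpp {D : Submodule 𝕜 H} (t : NonnegForm 𝕜 D) : Set H :=
  {g | ∃ hg : g ∈ D, ∃ u : ℕ → D, (∀ n, (u n : H) ∈ Dplus t) ∧
    Tendsto (fun n => (u n : H)) atTop (𝓝 g) ∧
    Tendsto (fun n => RCLike.re (t.toFun (u n - ⟨g, hg⟩) (u n - ⟨g, hg⟩))) atTop (𝓝 0)}

/-- The form `t` is closed. -/
def FormClosed {D : Submodule 𝕜 H} (t : NonnegForm 𝕜 D) : Prop :=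
  ∀ (u : ℕ → D) (g : H), Tendsto (fun n => (u n : H)) atTop (𝓝 g) →
    (∀ ε > (0 : ℝ), ∃ N, ∀ n ≥ N, ∀ m ≥ N, RCLike.re (t.toFun (u n - u m) (u n - u m)) < ε) →
    ∃ hg : g ∈ D,
      Tendsto (fun n => RCLike.re (t.toFun (u n - ⟨g, hg⟩) (u n - ⟨g, hg⟩))) atTop (𝓝 0)

/-- The form `t` is closable. -/
def FormClosable {D : Submodule 𝕜 H} (t : NonnegForm 𝕜 D) : Prop :=
  ∀ u : ℕ → D, Tendsto (fun n => (u n : H)) atTop (𝓝 (0 : H)) →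
    (∀ ε > (0 : ℝ), ∃ N, ∀ n ≥ N, ∀ m ≥ N, RCLike.re (t.toFun (u n - u m) (u n - u m)) < ε) →
    Tendsto (fun n => RCLike.re (t.toFun (u n) (u n))) atTop (𝓝 0)

/-- The partial operator `S` represents the form `t`:
`⟪S g, h⟫ = t (g, h)` for all `g ∈ D ∩ dom S` and `h ∈ D`. -/
def Represents {D : Submodule 𝕜 H} (t : NonnegForm 𝕜 D) (S : H →ₗ.[𝕜] H) : Prop :=
  ∀ (g : H) (hgD : g ∈ D) (hgS : g ∈ S.domain) (h : D),
    @inner 𝕜 H _ (S ⟨g, hgS⟩) (h : H) = t.toFun ⟨g, hgD⟩ h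

/-- If `Q` is a closed densely defined operator with `dom Q = dom Q*Q`, then
`dom Q*` is the whole codomain space and `Q*` (hence `Q`) is bounded. -/
theorem closed_operator_with_full_composition_domain (Q : H →ₗ.[𝕜] K)
    (hdense : Dense (Q.domain : Set H)) (hclosed : Q.IsClosed)
    (hdom : ∀ (x : H) (hx : x ∈ Q.domain), Q ⟨x, hx⟩ ∈ Q.adjoint.domain) :
    Q.adjoint.domain = ⊤ ∧
    (∃ C : ℝ, ∀ y : Q.adjoint.domain, ‖Q.adjoint y‖ ≤ C * ‖(y : K)‖) ∧
    (∃ C : ℝ, ∀ x : Q.domain, ‖Q x‖ ≤ C * ‖(x : H)‖) := by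
  classical
  haveI : CompleteSpace Q.graph :=
    completeSpace_coe_iff_isComplete.mpr hclosed.isComplete
  have hfa : Q.adjoint.IsFormalAdjoint Q := LinearPMap.adjoint_isFormalAdjoint hdense
  have hmem : ∀ g : Q.graph, ((g : H × K)).2 ∈ Q.adjoint.domain := by
    intro g
    obtain ⟨x, hx1, hx2⟩ := Q.mem_graph_iff.mp g.2
    rw [← hx2]
    exact hdom x.1 x.2
  let f : Q.graph →ₗ[𝕜] ↥Q.adjoint.domain :=
    { toFun := fun g => ⟨(g : H × K).2, hmem g⟩
      map_add' := fun g h => rfl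
      map_smul' := fun c g => rfl }
  let A : Q.graph →ₗ[𝕜] H := Q.adjoint.toFun.comp f
  have hA : ∀ (g : Q.graph) (x : Q.domain),
      (inner 𝕜 (A g) (x : H) : 𝕜) = inner 𝕜 ((g : H × K).2) (Q x) :=
    fun g x => hfa ⟨(g : H × K).2, hmem g⟩ x
  have hAcont : Continuous A := by
    apply A.continuous_of_seq_closed_graph
    intro u x y hux hAy
    refine hdense.eq_of_inner_left 𝕜 fun v' hv' => ?_
    obtain ⟨v, rfl⟩ : ∃ v : Q.domain, (v : H) = v' := ⟨⟨v', hv'⟩, rfl⟩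
    have h1 : Tendsto (fun n => (inner 𝕜 (A (u n)) (v : H) : 𝕜)) atTop
        (𝓝 (inner 𝕜 y (v : H))) := hAy.inner tendsto_const_nhds
    have h2 : Tendsto (fun n => (inner 𝕜 (((u n : H × K)).2) (Q v) : 𝕜)) atTop
        (𝓝 (inner 𝕜 ((x : H × K)).2 (Q v))) :=
      (((continuous_subtype_val.snd).tendsto x).comp hux).inner tendsto_const_nhds
    have h1' : Tendsto (fun n => (inner 𝕜 (((u n : H × K)).2) (Q v) : 𝕜)) atTop
        (𝓝 (inner 𝕜 y (v : H))) := by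
      simpa only [hA] using h1
    have h3 : (inner 𝕜 y (v : H) : 𝕜) = inner 𝕜 ((x : H × K)).2 (Q v) :=
      tendsto_nhds_unique h1' h2
    rw [h3, ← hA x v]
  obtain ⟨C, hC0, hC⟩ := SemilinearMapClass.bound_of_continuous A hAcont
  set c : ℝ := Real.sqrt (2 * C + C ^ 2) with hc
  have hcsq : c ^ 2 = 2 * C + C ^ 2 := Real.sq_sqrt (by positivity)
  have hc0 : 0 ≤ c := Real.sqrt_nonneg _
  have hQbound : ∀ x : Q.domain, ‖Q x‖ ≤ c * ‖(x : H)‖ := by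
    intro x
    set g : Q.graph := ⟨((x : H), Q x), Q.mem_graph x⟩ with hg
    have h1 : (‖Q x‖ : ℝ) ^ 2 = re (inner 𝕜 ((g : H × K)).2 (Q x) : 𝕜) := by
      rw [show ((g : H × K)).2 = Q x from rfl, inner_self_eq_norm_sq]
    have h2 : re (inner 𝕜 ((g : H × K)).2 (Q x) : 𝕜) = re (inner 𝕜 (A g) (x : H) : 𝕜) := by
      rw [hA g x]
    have h3 : re (inner 𝕜 (A g) (x : H) : 𝕜) ≤ ‖A g‖ * ‖(x : H)‖ :=
      re_inner_le_norm (𝕜 := 𝕜) _ _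
    have h4 : ‖A g‖ ≤ C * (‖(x : H)‖ + ‖Q x‖) := by
      refine (hC g).trans (mul_le_mul_of_nonneg_left ?_ hC0.le)
      have : ‖g‖ = max ‖(x : H)‖ ‖Q x‖ := rfl
      rw [this]
      exact max_le (le_add_of_nonneg_right (norm_nonneg _))
        (le_add_of_nonneg_left (norm_nonneg _))
    have key : ‖Q x‖ ^ 2 ≤ C * (‖(x : H)‖ + ‖Q x‖) * ‖(x : H)‖ := by
      rw [h1, h2]
      exact h3.trans (mul_le_mul_of_nonneg_right h4 (norm_nonneg _))
    have hsq : ‖Q x‖ ^ 2 ≤ (c * ‖(x : H)‖) ^ 2 := by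
      rw [mul_pow, hcsq]
      nlinarith [norm_nonneg (Q x), norm_nonneg (x : H),
        sq_nonneg (‖Q x‖ - C * ‖(x : H)‖)]
    calc ‖Q x‖ = Real.sqrt (‖Q x‖ ^ 2) := (Real.sqrt_sq (norm_nonneg _)).symm
      _ ≤ Real.sqrt ((c * ‖(x : H)‖) ^ 2) := Real.sqrt_le_sqrt hsq
      _ = c * ‖(x : H)‖ := Real.sqrt_sq (by positivity)
  have htop : Q.adjoint.domain = ⊤ := by
    rw [Submodule.eq_top_iff']
    intro y
    rw [Q.mem_adjoint_domain_iff]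
    refine AddMonoidHomClass.continuous_of_bound _ (‖y‖ * c) fun x => ?_
    calc ‖((innerₛₗ 𝕜 y).comp Q.toFun) x‖ = ‖(inner 𝕜 y (Q x) : 𝕜)‖ := rfl
      _ ≤ ‖y‖ * ‖Q x‖ := norm_inner_le_norm _ _
      _ ≤ ‖y‖ * (c * ‖(x : H)‖) :=
          mul_le_mul_of_nonneg_left (hQbound x) (norm_nonneg _)
      _ = ‖y‖ * c * ‖(x : H)‖ := (mul_assoc _ _ _).symm
  refine ⟨htop, ⟨c, fun y => ?_⟩, ⟨c, hQbound⟩⟩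
  set w := Q.adjoint y with hw
  obtain ⟨u, hu_mem, hu_lim⟩ := mem_closure_iff_seq_limit.mp (hdense w)
  have hlim1 : Tendsto (fun n => re (inner 𝕜 w (u n) : 𝕜)) atTop
      (𝓝 (re (inner 𝕜 w w : 𝕜))) :=
    (RCLike.continuous_re.tendsto _).comp (tendsto_const_nhds.inner hu_lim)
  have hlim2 : Tendsto (fun n => c * ‖(y : K)‖ * ‖u n‖) atTop
      (𝓝 (c * ‖(y : K)‖ * ‖w‖)) :=
    tendsto_const_nhds.mul hu_lim.norm
  have hle : ∀ n, re (inner 𝕜 w (u n) : 𝕜) ≤ c * ‖(y : K)‖ * ‖u n‖ := by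
    intro n
    have heq := hfa y ⟨u n, hu_mem n⟩
    calc re (inner 𝕜 w (u n) : 𝕜)
        = re (inner 𝕜 (y : K) (Q ⟨u n, hu_mem n⟩) : 𝕜) := by rw [← heq]
      _ ≤ ‖(inner 𝕜 (y : K) (Q ⟨u n, hu_mem n⟩) : 𝕜)‖ :=
          (le_abs_self _).trans (abs_re_le_norm _)
      _ ≤ ‖(y : K)‖ * ‖Q ⟨u n, hu_mem n⟩‖ := norm_inner_le_norm _ _
      _ ≤ ‖(y : K)‖ * (c * ‖u n‖) :=
          mul_le_mul_of_nonneg_left (hQbound ⟨u n, hu_mem n⟩) (norm_nonneg _)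
      _ = c * ‖(y : K)‖ * ‖u n‖ := by ring
  have hsq : ‖w‖ ^ 2 ≤ c * ‖(y : K)‖ * ‖w‖ := by
    have h := le_of_tendsto_of_tendsto' hlim1 hlim2 hle
    rwa [inner_self_eq_norm_sq] at h
  rcases eq_or_lt_of_le (norm_nonneg w) with h0 | h0
  · rw [← h0]; positivity
  · exact le_of_mul_le_mul_right (by nlinarith) h0
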